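/- Let 0 < β ≤ α, λ = 1/√(αβ), and let z ∈ ℝ² with z₁, z₂ > 0 and β ≤ z₂/z₁ ≤ α. For any point m on the segment from z to z' = (λ·z₂, z₁/λ), m₁·m₂ ≤ (1/4)·(√(α/β) + √(β/α))²·z₁·z₂. (Suboptimality bound of an angular split.) -/

import Mathlib

set_option maxHeartbeats 1000000


theorem stmt9 (α β : ℝ) (hβ : 0 < β) (hβα : β ≤ α) (l : ℝ)
    (hl : l = 1 / Real.sqrt (α * β)) (z1 z2 : ℝ) (hz1 : 0 < z1) (hz2 : 0 < z2)
    (hlo : β ≤ z2 / z1) (hhi : z2 / z1 ≤ α) (t : ℝ) (ht : t ∈ Set.Icc (0 : ℝ) 1) :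
    (t * z1 + (1 - t) * (l * z2)) * (t * z2 + (1 - t) * (z1 / l)) ≤
      (1 / 4) * (Real.sqrt (α / β) + Real.sqrt (β / α)) ^ 2 * (z1 * z2) := by
  obtain ⟨ht0, ht1⟩ := ht
  have hα : 0 < α := lt_of_lt_of_le hβ hβα
  have hab : 0 < α * β := mul_pos hα hβ
  set s := Real.sqrt (α * β) with hs
  have hs0 : 0 < s := Real.sqrt_pos.mpr hab
  have hs2 : s ^ 2 = α * β := Real.sq_sqrt hab.le
  have hsne : s ≠ 0 := ne_of_gt hs0
  have hrw : Real.sqrt (α / β) + Real.sqrt (β / α) = (α + β) / s := by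
    rw [show α / β = α ^ 2 / (α * β) by field_simp,
        show β / α = β ^ 2 / (α * β) by field_simp,
        Real.sqrt_div (sq_nonneg α), Real.sqrt_div (sq_nonneg β),
        Real.sqrt_sq hα.le, Real.sqrt_sq hβ.le, ← hs]
    ring
  have hlo' : β * z1 ≤ z2 := by
    calc β * z1 ≤ (z2 / z1) * z1 := by nlinarith
      _ = z2 := by field_simp
  have hhi' : z2 ≤ α * z1 := by
    calc z2 = (z2 / z1) * z1 := by field_simp
      _ ≤ α * z1 := by nlinarith
  have h2s : 2 * s ≤ α + β := by nlinarith [sq_nonneg (α - β), hs0]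
  have step1 : s * (α * β * z1 ^ 2 + z2 ^ 2) ≤ (α ^ 2 + β ^ 2) * (z1 * z2) := by
    have h1 : 0 ≤ (z2 - β * z1) * (α * z1 - z2) := by nlinarith
    nlinarith [mul_nonneg hs0.le h1, mul_pos hz1 hz2,
      mul_le_mul_of_nonneg_right h2s (mul_pos (mul_pos hz1 hz2) hs0).le,
      sq_nonneg (α - β), mul_nonneg (mul_nonneg (sq_nonneg (α - β)) hz1.le) hz2.le]
  rw [hl, hrw]
  rw [show (1:ℝ) / s = s⁻¹ by ring]
  have key : ((t * z1 + (1 - t) * (s⁻¹ * z2)) * (t * z2 + (1 - t) * (z1 / s⁻¹))) * s ^ 2 ≤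
      (1 / 4 * ((α + β) / s) ^ 2 * (z1 * z2)) * s ^ 2 := by
    have e1 : (t * z1 + (1 - t) * (s⁻¹ * z2)) * (t * z2 + (1 - t) * (z1 / s⁻¹)) * s ^ 2 =
        (t * z1 * s + (1 - t) * z2) * (t * z2 * s + (1 - t) * z1 * s ^ 2) := by
      field_simp
    have e2 : (1 / 4 * ((α + β) / s) ^ 2 * (z1 * z2)) * s ^ 2 =
        1 / 4 * (α + β) ^ 2 * (z1 * z2) := by
      field_simp
    rw [e1, e2, hs2]
    have hu : 0 ≤ t * (1 - t) := mul_nonneg ht0 (by linarith)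
    have hts : t ^ 2 * s ^ 2 * (z1 * z2) = t ^ 2 * (α * β) * (z1 * z2) := by rw [hs2]
    nlinarith [hts, mul_nonneg hu (sub_nonneg.mpr step1),
      mul_nonneg (mul_nonneg (mul_pos hz1 hz2).le
        (by nlinarith [sq_nonneg (1 - 2*t)] : (0:ℝ) ≤ 1/4 - t*(1-t))) (sq_nonneg (α - β))]
  exact le_of_mul_le_mul_right key (pow_pos hs0 2)
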